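/- Let d, b ≥ 1, let x ∈ ℝ^d be nonzero, and let r ≥ 1. Consider a Count Sketch of x with r rows and b buckets: for each row j = 1,…,r draw a uniformly random hash h_j : {1,…,d} → {1,…,b} and uniformly random signs s_j : {1,…,d} → {−1,+1}, all random variables across all rows mutually independent; row j stores C_j(y) = Σ_{i : h_j(i)=y} s_j(i)·x_i and yields the row estimate x̂_i^{(j)} = s_j(i)·C_j(h_j(i)); the final estimate x̂_i is the median over j of x̂_i^{(j)}. Then for every coordinate i, P(|x̂_i − x_i| > √(3/b)·‖x‖₂) ≤ exp(−r/18). -/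

import Mathlib

open Finset

/-- The real-valued sign `±1` associated to a boolean. -/
def csSign (s : Bool) : ℝ := if s then 1 else -1

/-- A Count Sketch row: bucket `y` stores `∑_{i : h i = y} s i • x i`. -/
noncomputable def csRow {d b : ℕ} (x : EuclideanSpace ℝ (Fin d))
    (h : Fin d → Fin b) (s : Fin d → Bool) (y : Fin b) : ℝ :=
  ∑ i ∈ Finset.univ.filter (fun i => h i = y), csSign (s i) * x i

/-- The Count Sketch row point estimate of coordinate `i`: `s i • C (h i)`. -/
noncomputable def csEstimate {d b : ℕ} (x : EuclideanSpace ℝ (Fin d))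
    (h : Fin d → Fin b) (s : Fin d → Bool) (i : Fin d) : ℝ :=
  csSign (s i) * csRow x h s (h i)

/-- The sample median of `v : Fin r → ℝ`: the `⌈r/2⌉`-th order statistic. -/
noncomputable def sampleMedian {r : ℕ} (hr : 0 < r) (v : Fin r → ℝ) : ℝ :=
  v (Tuple.sort v ⟨(r + 1) / 2 - 1, by omega⟩)

/-- The `r`-row Count Sketch point estimate of coordinate `i`: the median over
the rows `j` of the row estimates `s_j i • C_j (h_j i)`. -/
noncomputable def csMedianEstimate {d b r : ℕ} (hr : 0 < r) (x : EuclideanSpace ℝ (Fin d))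
    (hs : Fin r → Fin d → Fin b) (ss : Fin r → Fin d → Bool) (i : Fin d) : ℝ :=
  sampleMedian hr fun j => csEstimate x (hs j) (ss j) i

lemma csSign_mul_self (s : Bool) : csSign s * csSign s = 1 := by
  cases s <;> simp [csSign]

lemma csSign_not (s : Bool) : csSign (!s) = -csSign s := by
  cases s <;> simp [csSign]


lemma csEstimate_sub {d b : ℕ} (x : EuclideanSpace ℝ (Fin d)) (h : Fin d → Fin b)
    (s : Fin d → Bool) (i : Fin d) :
    csEstimate x h s i - x i =
      ∑ k ∈ Finset.univ.erase i,
        (if h k = h i then (1:ℝ) else 0) * (csSign (s i) * (csSign (s k) * x k)) := by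
  rw [csEstimate, csRow, Finset.mul_sum]
  have hi : i ∈ Finset.univ.filter (fun k => h k = h i) := by simp
  rw [← Finset.add_sum_erase _ _ hi, ← Finset.filter_erase, Finset.sum_filter,
    ← mul_assoc, csSign_mul_self, one_mul]
  rw [add_sub_cancel_left]
  apply Finset.sum_congr rfl
  intro k _
  split <;> ring

lemma sum_sign_mul {d : ℕ} {k l : Fin d} (hkl : k ≠ l) :
    ∑ s : Fin d → Bool, csSign (s k) * csSign (s l) = 0 := by
  have hinv : Function.Involutive (fun s : Fin d → Bool => Function.update s k (!s k)) := by
    intro s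
    funext j
    by_cases hj : j = k
    · subst hj; simp
    · simp [Function.update_of_ne hj]
  have := Equiv.sum_comp hinv.toPerm (fun s : Fin d → Bool => csSign (s k) * csSign (s l))
  have h2 : ∑ s : Fin d → Bool,
      csSign ((Function.update s k (!s k)) k) * csSign ((Function.update s k (!s k)) l)
      = ∑ s : Fin d → Bool, -(csSign (s k) * csSign (s l)) := by
    apply Finset.sum_congr rfl
    intro s _
    rw [Function.update_self, Function.update_of_ne (Ne.symm hkl), csSign_not]
    ring
  have h3 : ∑ s : Fin d → Bool, csSign (s k) * csSign (s l)
      = -∑ s : Fin d → Bool, csSign (s k) * csSign (s l) := by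
    rw [← Finset.sum_neg_distrib, ← h2]
    exact this.symm
  linarith


lemma sum_ind_hash {d b : ℕ} {i k : Fin d} (hk : k ≠ i) :
    (b:ℝ) * ∑ h : Fin d → Fin b, (if h k = h i then (1:ℝ) else 0) = (b:ℝ)^d := by
  classical
  set e := Equiv.funSplitAt k (Fin b) with he
  have hsum := Equiv.sum_comp e.symm (fun h : Fin d → Fin b => if h k = h i then (1:ℝ) else 0)
  rw [← hsum, Fintype.sum_prod_type]
  have key : ∀ v : Fin b, ∀ g : { j // j ≠ k } → Fin b,
      (if (e.symm (v, g)) k = (e.symm (v, g)) i then (1:ℝ) else 0)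
        = (if v = g ⟨i, Ne.symm hk⟩ then (1:ℝ) else 0) := by
    intro v g
    congr 1
    simp [he, Equiv.funSplitAt, Equiv.piSplitAt, Ne.symm hk]
  calc (b:ℝ) * ∑ v : Fin b, ∑ g : { j // j ≠ k } → Fin b,
        (if (e.symm (v, g)) k = (e.symm (v, g)) i then (1:ℝ) else 0)
      = (b:ℝ) * ∑ g : { j // j ≠ k } → Fin b, ∑ v : Fin b,
        (if v = g ⟨i, Ne.symm hk⟩ then (1:ℝ) else 0) := by
        rw [Finset.sum_comm]
        congr 1
        exact Finset.sum_congr rfl fun g _ => Finset.sum_congr rfl fun v _ => key v g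
    _ = (b:ℝ) * ∑ g : { j // j ≠ k } → Fin b, (1:ℝ) := by
        congr 1
        apply Finset.sum_congr rfl
        intro g _
        rw [Finset.sum_ite_eq' Finset.univ (g ⟨i, Ne.symm hk⟩) (fun _ => (1:ℝ))]
        simp
    _ = (b:ℝ) * (Fintype.card ({ j // j ≠ k } → Fin b) : ℝ) := by
        rw [Finset.sum_const, Finset.card_univ, nsmul_eq_mul, mul_one]
    _ = ((Fintype.card (Fin b × ({ j // j ≠ k } → Fin b)) : ℕ) : ℝ) := by
        rw [Fintype.card_prod, Fintype.card_fin]; push_cast; ring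
    _ = ((Fintype.card (Fin d → Fin b) : ℕ) : ℝ) := by
        rw [Fintype.card_congr e.symm]
    _ = (b:ℝ)^d := by
        rw [Fintype.card_fun, Fintype.card_fin, Fintype.card_fin]; push_cast; ring

lemma norm_sq_eq {d : ℕ} (x : EuclideanSpace ℝ (Fin d)) : ‖x‖^2 = ∑ k, (x k)^2 := by
  rw [EuclideanSpace.norm_eq, Real.sq_sqrt (by positivity)]
  exact Finset.sum_congr rfl fun k _ => by rw [Real.norm_eq_abs, sq_abs]


lemma sum_sq_err {d b : ℕ} (x : EuclideanSpace ℝ (Fin d)) (i : Fin d) :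
    (b:ℝ) * ∑ p : (Fin d → Fin b) × (Fin d → Bool), (csEstimate x p.1 p.2 i - x i)^2
      ≤ (Fintype.card ((Fin d → Fin b) × (Fin d → Bool)) : ℝ) * ‖x‖^2 := by
  classical
  have key : ∑ p : (Fin d → Fin b) × (Fin d → Bool), (csEstimate x p.1 p.2 i - x i)^2
      = ∑ k ∈ Finset.univ.erase i,
          (x k)^2 * (2:ℝ)^d * ∑ h : Fin d → Fin b, (if h k = h i then (1:ℝ) else 0) := by
    rw [Fintype.sum_prod_type]
    calc ∑ h : Fin d → Fin b, ∑ s : Fin d → Bool, (csEstimate x h s i - x i)^2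
        = ∑ h : Fin d → Fin b, ∑ k ∈ Finset.univ.erase i,
            (if h k = h i then (1:ℝ) else 0) * ((x k)^2 * (2:ℝ)^d) := by
          apply Finset.sum_congr rfl
          intro h _
          calc ∑ s : Fin d → Bool, (csEstimate x h s i - x i)^2
              = ∑ s : Fin d → Bool, ∑ k ∈ Finset.univ.erase i, ∑ l ∈ Finset.univ.erase i,
                  ((if h k = h i then (1:ℝ) else 0) * (if h l = h i then (1:ℝ) else 0))
                    * ((csSign (s i) * csSign (s i)) * (csSign (s k) * csSign (s l)))
                    * (x k * x l) := by
                apply Finset.sum_congr rfl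
                intro s _
                rw [csEstimate_sub, sq, Finset.sum_mul_sum]
                exact Finset.sum_congr rfl fun k _ => Finset.sum_congr rfl fun l _ => by ring
            _ = ∑ k ∈ Finset.univ.erase i, ∑ l ∈ Finset.univ.erase i,
                  ((if h k = h i then (1:ℝ) else 0) * (if h l = h i then (1:ℝ) else 0))
                    * (x k * x l)
                    * ∑ s : Fin d → Bool, csSign (s k) * csSign (s l) := by
                rw [Finset.sum_comm]
                apply Finset.sum_congr rfl
                intro k _
                rw [Finset.sum_comm]
                apply Finset.sum_congr rfl
                intro l _
                rw [Finset.mul_sum]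
                apply Finset.sum_congr rfl
                intro s _
                rw [csSign_mul_self]
                ring
            _ = ∑ k ∈ Finset.univ.erase i,
                  (if h k = h i then (1:ℝ) else 0) * ((x k)^2 * (2:ℝ)^d) := by
                apply Finset.sum_congr rfl
                intro k hk
                rw [Finset.sum_eq_single k]
                · have : ∑ s : Fin d → Bool, csSign (s k) * csSign (s k)
                      = (2:ℝ)^d := by
                    rw [Finset.sum_congr rfl (fun s _ => csSign_mul_self (s k)),
                      Finset.sum_const, Finset.card_univ, Fintype.card_fun,
                      Fintype.card_fin, Fintype.card_bool, nsmul_eq_mul, mul_one]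
                    push_cast; ring
                  rw [this]
                  split <;> ring
                · intro l _ hlk
                  rw [sum_sign_mul (Ne.symm hlk)]
                  ring
                · intro hk'
                  exact absurd hk hk'
        _ = ∑ k ∈ Finset.univ.erase i,
            (x k)^2 * (2:ℝ)^d * ∑ h : Fin d → Fin b, (if h k = h i then (1:ℝ) else 0) := by
          rw [Finset.sum_comm]
          apply Finset.sum_congr rfl
          intro k _
          rw [Finset.mul_sum]
          exact Finset.sum_congr rfl fun h _ => by ring
  rw [key, Finset.mul_sum]
  have hcard : (Fintype.card ((Fin d → Fin b) × (Fin d → Bool)) : ℝ)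
      = (b:ℝ)^d * (2:ℝ)^d := by
    rw [Fintype.card_prod, Fintype.card_fun, Fintype.card_fun]
    simp only [Fintype.card_fin, Fintype.card_bool]
    push_cast; ring
  rw [hcard, norm_sq_eq]
  calc ∑ k ∈ Finset.univ.erase i,
        (b:ℝ) * ((x k)^2 * (2:ℝ)^d * ∑ h : Fin d → Fin b, (if h k = h i then (1:ℝ) else 0))
      = ∑ k ∈ Finset.univ.erase i, (b:ℝ)^d * (2:ℝ)^d * (x k)^2 := by
        apply Finset.sum_congr rfl
        intro k hk
        have := sum_ind_hash (b := b) (Finset.ne_of_mem_erase hk)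
        calc (b:ℝ) * ((x k)^2 * (2:ℝ)^d * ∑ h : Fin d → Fin b, (if h k = h i then (1:ℝ) else 0))
            = ((b:ℝ) * ∑ h : Fin d → Fin b, (if h k = h i then (1:ℝ) else 0)) * ((x k)^2 * (2:ℝ)^d) := by ring
          _ = (b:ℝ)^d * (2:ℝ)^d * (x k)^2 := by rw [this]; ring
    _ ≤ ∑ k, (b:ℝ)^d * (2:ℝ)^d * (x k)^2 := by
        apply Finset.sum_le_sum_of_subset_of_nonneg (Finset.erase_subset _ _)
        intro k _ _
        positivity
    _ = (b:ℝ)^d * (2:ℝ)^d * ∑ k, (x k)^2 := by rw [Finset.mul_sum]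

open scoped Classical in
lemma median_many_bad {r : ℕ} (hr : 0 < r) (v : Fin r → ℝ) (c t : ℝ)
    (hmed : t < |sampleMedian hr v - c|) :
    r ≤ 2 * (univ.filter (fun j => t < |v j - c|)).card := by
  set m : Fin r := ⟨(r + 1) / 2 - 1, by omega⟩ with hm
  have hmono := Tuple.monotone_sort v
  have hmv : sampleMedian hr v = v (Tuple.sort v m) := rfl
  rcases lt_abs.mp hmed with h1 | h1
  · have hsub : (Finset.Ici m).image (Tuple.sort v) ⊆ univ.filter (fun j => t < |v j - c|) := by
      intro j hj
      simp only [Finset.mem_image, Finset.mem_Ici] at hj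
      obtain ⟨p, hp, rfl⟩ := hj
      simp only [Finset.mem_filter, Finset.mem_univ, true_and]
      have h2 : v (Tuple.sort v m) ≤ v (Tuple.sort v p) := hmono hp
      have h3 : t < v (Tuple.sort v p) - c := by rw [hmv] at h1; linarith
      exact lt_of_lt_of_le h3 (le_abs_self _)
    have hcard : ((Finset.Ici m).image (Tuple.sort v)).card = r - ((r+1)/2 - 1) := by
      rw [Finset.card_image_of_injective _ (Tuple.sort v).injective, Fin.card_Ici]
    have hle := Finset.card_le_card hsub
    omega
  · have hsub : (Finset.Iic m).image (Tuple.sort v) ⊆ univ.filter (fun j => t < |v j - c|) := by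
      intro j hj
      simp only [Finset.mem_image, Finset.mem_Iic] at hj
      obtain ⟨p, hp, rfl⟩ := hj
      simp only [Finset.mem_filter, Finset.mem_univ, true_and]
      have h2 : v (Tuple.sort v p) ≤ v (Tuple.sort v m) := hmono hp
      have h3 : t < -(v (Tuple.sort v p) - c) := by rw [hmv] at h1; linarith
      exact lt_of_lt_of_le h3 (neg_le_abs _)
    have hcard : ((Finset.Iic m).image (Tuple.sort v)).card = (r+1)/2 - 1 + 1 := by
      rw [Finset.card_image_of_injective _ (Tuple.sort v).injective, Fin.card_Iic]
    have hle := Finset.card_le_card hsub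
    omega


lemma chernoff_count {A : Type*} [Fintype A] (P : A → Prop) [DecidablePred P] (r : ℕ)
    (hp : 3 * ((univ.filter P).card : ℝ) ≤ (Fintype.card A : ℝ)) :
    ∑ ω : Fin r → A, (2:ℝ)^((univ.filter (fun j => P (ω j))).card)
      ≤ ((4:ℝ)/3 * (Fintype.card A : ℝ))^r := by
  have step1 : ∀ ω : Fin r → A, (2:ℝ)^((univ.filter (fun j => P (ω j))).card)
      = ∏ j : Fin r, (if P (ω j) then (2:ℝ) else 1) := by
    intro ω
    rw [Finset.prod_ite, Finset.prod_const, Finset.prod_const, one_pow, mul_one]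
  rw [Finset.sum_congr rfl (fun ω _ => step1 ω),
    ← Fintype.prod_sum (fun (_ : Fin r) (a : A) => if P a then (2:ℝ) else 1)]
  have hval : ∑ a : A, (if P a then (2:ℝ) else 1)
      = (Fintype.card A : ℝ) + ((univ.filter P).card : ℝ) := by
    have : ∀ a : A, (if P a then (2:ℝ) else 1) = 1 + (if P a then (1:ℝ) else 0) := by
      intro a; split <;> ring
    rw [Finset.sum_congr rfl (fun a _ => this a), Finset.sum_add_distrib,
      Finset.sum_const, Finset.sum_boole, Finset.card_univ, nsmul_eq_mul, mul_one]
  rw [Finset.prod_const, Finset.card_univ, Fintype.card_fin]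
  apply pow_le_pow_left₀
  · rw [hval]; positivity
  · rw [hval]; linarith

open scoped Classical in
lemma row_tail {d b : ℕ} (hb : 1 ≤ b) (x : EuclideanSpace ℝ (Fin d)) (hx : x ≠ 0) (i : Fin d) :
    3 * ((univ.filter (fun p : (Fin d → Fin b) × (Fin d → Bool) =>
        Real.sqrt (3 / b) * ‖x‖ < |csEstimate x p.1 p.2 i - x i|)).card : ℝ)
      ≤ (Fintype.card ((Fin d → Fin b) × (Fin d → Bool)) : ℝ) := by
  set t := Real.sqrt (3 / b) * ‖x‖ with hts
  set T := univ.filter (fun p : (Fin d → Fin b) × (Fin d → Bool) =>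
      t < |csEstimate x p.1 p.2 i - x i|) with hT
  have hb0 : (0:ℝ) < b := by exact_mod_cast hb
  have hxn : (0:ℝ) < ‖x‖ := norm_pos_iff.mpr hx
  have ht0 : 0 ≤ t := by positivity
  have ht2 : (b:ℝ) * t^2 = 3 * ‖x‖^2 := by
    rw [hts, mul_pow, Real.sq_sqrt (by positivity)]
    field_simp
  have h1 : (T.card : ℝ) * t^2 ≤ ∑ p : (Fin d → Fin b) × (Fin d → Bool),
      (csEstimate x p.1 p.2 i - x i)^2 := by
    calc (T.card : ℝ) * t^2 = ∑ _p ∈ T, t^2 := by rw [Finset.sum_const, nsmul_eq_mul]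
      _ ≤ ∑ p ∈ T, (csEstimate x p.1 p.2 i - x i)^2 := by
          apply Finset.sum_le_sum
          intro p hp
          rw [hT, Finset.mem_filter] at hp
          calc t^2 ≤ |csEstimate x p.1 p.2 i - x i|^2 :=
                pow_le_pow_left₀ ht0 (le_of_lt hp.2) 2
            _ = (csEstimate x p.1 p.2 i - x i)^2 := sq_abs _
      _ ≤ ∑ p : (Fin d → Fin b) × (Fin d → Bool), (csEstimate x p.1 p.2 i - x i)^2 := by
          apply Finset.sum_le_sum_of_subset_of_nonneg (Finset.filter_subset _ _)
          intro p _ _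
          positivity
  have h2 := sum_sq_err (b := b) x i
  have h3 : 3 * (T.card : ℝ) * ‖x‖^2
      ≤ (Fintype.card ((Fin d → Fin b) × (Fin d → Bool)) : ℝ) * ‖x‖^2 := by
    have h4 : (b:ℝ) * ((T.card : ℝ) * t^2)
        ≤ (b:ℝ) * ∑ p : (Fin d → Fin b) × (Fin d → Bool), (csEstimate x p.1 p.2 i - x i)^2 :=
      mul_le_mul_of_nonneg_left h1 (le_of_lt hb0)
    nlinarith [h4, h2]
  have := le_of_mul_le_mul_right (by linarith [h3] : 3 * (T.card : ℝ) * ‖x‖^2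
      ≤ (Fintype.card ((Fin d → Fin b) × (Fin d → Bool)) : ℝ) * ‖x‖^2) (by positivity : (0:ℝ) < ‖x‖^2)
  linarith


lemma num_bound : (4:ℝ)/3 ≤ Real.exp (-(1:ℝ)/18) * Real.sqrt 2 := by
  have h1 : (17:ℝ)/18 ≤ Real.exp (-(1:ℝ)/18) := by
    have := Real.add_one_le_exp (-(1:ℝ)/18)
    linarith
  have h2 : (0:ℝ) ≤ Real.sqrt 2 := Real.sqrt_nonneg 2
  have h3 : Real.sqrt 2 ^ 2 = 2 := Real.sq_sqrt (by norm_num)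
  have h4 : (4:ℝ)/3 ≤ (17:ℝ)/18 * Real.sqrt 2 := by nlinarith
  have h5 : (17:ℝ)/18 * Real.sqrt 2 ≤ Real.exp (-(1:ℝ)/18) * Real.sqrt 2 :=
    mul_le_mul_of_nonneg_right h1 h2
  linarith


open scoped Classical in
/-- Count Sketch `ℓ₂` point-query guarantee for a single coordinate: over
uniformly random, mutually independent hashes and signs for the `r` rows, the
median estimate `x̂ i` satisfies `P(|x̂ i - x i| > √(3/b) ‖x‖₂) ≤ exp (-r/18)`. -/
theorem countSketch_point_query (d b r : ℕ) (hd : 1 ≤ d) (hb : 1 ≤ b) (hr : 0 < r)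
    (x : EuclideanSpace ℝ (Fin d)) (hx : x ≠ 0) (i : Fin d) :
    ((Finset.univ.filter
          (fun p : (Fin r → Fin d → Fin b) × (Fin r → Fin d → Bool) =>
            Real.sqrt (3 / b) * ‖x‖ < |csMedianEstimate hr x p.1 p.2 i - x i|)).card : ℝ) /
        (Fintype.card ((Fin r → Fin d → Fin b) × (Fin r → Fin d → Bool)) : ℝ)
      ≤ Real.exp (-(r : ℝ) / 18) := by
  set t := Real.sqrt (3 / b) * ‖x‖ with hts
  set P : ((Fin d → Fin b) × (Fin d → Bool)) → Prop :=
    fun a => t < |csEstimate x a.1 a.2 i - x i| with hP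
  set M := (Fintype.card ((Fin d → Fin b) × (Fin d → Bool)) : ℝ) with hM
  have : Nonempty ((Fin d → Fin b) × (Fin d → Bool)) :=
    ⟨(fun _ => ⟨0, hb⟩, fun _ => true)⟩
  have hMpos : 0 < M := by
    rw [hM]
    exact_mod_cast Fintype.card_pos
  set E := Finset.univ.filter
      (fun p : (Fin r → Fin d → Fin b) × (Fin r → Fin d → Bool) =>
        t < |csMedianEstimate hr x p.1 p.2 i - x i|) with hE
  have hs2 : (1:ℝ) ≤ Real.sqrt 2 := by
    rw [show (1:ℝ) = Real.sqrt 1 by simp]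
    exact Real.sqrt_le_sqrt (by norm_num)
  have hs2' : (0:ℝ) < Real.sqrt 2 := by linarith
  -- number of bad rows for each sketch
  have hN : ∀ p : (Fin r → Fin d → Fin b) × (Fin r → Fin d → Bool), p ∈ E →
      (Real.sqrt 2)^r ≤ (2:ℝ)^((univ.filter (fun j => P (p.1 j, p.2 j))).card) := by
    intro p hp
    rw [hE, Finset.mem_filter] at hp
    have hmed := hp.2
    have hrows := median_many_bad hr (fun j => csEstimate x (p.1 j) (p.2 j) i) (x i) t hmed
    set N := (univ.filter (fun j => P (p.1 j, p.2 j))).card with hNdef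
    have hrows' : r ≤ 2 * N := hrows
    calc (Real.sqrt 2)^r ≤ (Real.sqrt 2)^(2*N) := pow_le_pow_right₀ hs2 hrows'
      _ = (2:ℝ)^N := by rw [pow_mul, Real.sq_sqrt (by norm_num)]
  -- Chernoff sum bound
  have hcher : ∑ ω : Fin r → (Fin d → Fin b) × (Fin d → Bool), (2:ℝ)^((univ.filter (fun j => P (ω j))).card)
      ≤ ((4:ℝ)/3 * M)^r :=
    chernoff_count P r (row_tail hb x hx i)
  -- transfer sum over pairs
  have htrans : ∑ p : (Fin r → Fin d → Fin b) × (Fin r → Fin d → Bool),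
      (2:ℝ)^((univ.filter (fun j => P (p.1 j, p.2 j))).card)
      = ∑ ω : Fin r → (Fin d → Fin b) × (Fin d → Bool), (2:ℝ)^((univ.filter (fun j => P (ω j))).card) := by
    rw [← Equiv.sum_comp (Equiv.arrowProdEquivProdArrow (Fin r) (fun _ => Fin d → Fin b) (fun _ => Fin d → Bool))
      (fun p : (Fin r → Fin d → Fin b) × (Fin r → Fin d → Bool) =>
        (2:ℝ)^((univ.filter (fun j => P (p.1 j, p.2 j))).card))]
    apply Finset.sum_congr rfl
    intro ω _
    rfl
  have key1 : (E.card : ℝ) * (Real.sqrt 2)^r ≤ ((4:ℝ)/3 * M)^r := by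
    calc (E.card : ℝ) * (Real.sqrt 2)^r = ∑ _p ∈ E, (Real.sqrt 2)^r := by
          rw [Finset.sum_const, nsmul_eq_mul]
      _ ≤ ∑ p ∈ E, (2:ℝ)^((univ.filter (fun j => P (p.1 j, p.2 j))).card) :=
          Finset.sum_le_sum hN
      _ ≤ ∑ p : (Fin r → Fin d → Fin b) × (Fin r → Fin d → Bool),
            (2:ℝ)^((univ.filter (fun j => P (p.1 j, p.2 j))).card) := by
          apply Finset.sum_le_sum_of_subset_of_nonneg (Finset.filter_subset _ _)
          intro p _ _
          positivity
      _ = _ := htrans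
      _ ≤ ((4:ℝ)/3 * M)^r := hcher
  -- card of full space
  have hcardfull : (Fintype.card ((Fin r → Fin d → Fin b) × (Fin r → Fin d → Bool)) : ℝ)
      = M^r := by
    have hnat : Fintype.card ((Fin r → Fin d → Fin b) × (Fin r → Fin d → Bool))
        = Fintype.card ((Fin d → Fin b) × (Fin d → Bool)) ^ r := by
      rw [show Fintype.card ((Fin r → Fin d → Fin b) × (Fin r → Fin d → Bool))
          = Fintype.card (Fin r → (Fin d → Fin b) × (Fin d → Bool)) from
        Fintype.card_congr (Equiv.arrowProdEquivProdArrow _ _ _).symm]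
      rw [Fintype.card_fun, Fintype.card_fin]
    rw [hM, hnat]
    push_cast
    ring
  rw [hcardfull, div_le_iff₀ (by positivity)]
  -- final numeric step
  have hexp : ((4:ℝ)/3 * M)^r ≤ (Real.exp (-(1:ℝ)/18) * Real.sqrt 2 * M)^r := by
    apply pow_le_pow_left₀ (by positivity)
    exact mul_le_mul_of_nonneg_right num_bound (le_of_lt hMpos)
  have hsplit : (Real.exp (-(1:ℝ)/18) * Real.sqrt 2 * M)^r
      = Real.exp (-(r:ℝ)/18) * M^r * (Real.sqrt 2)^r := by
    rw [mul_pow, mul_pow, ← Real.exp_nat_mul]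
    ring_nf
  have : (E.card : ℝ) * (Real.sqrt 2)^r
      ≤ (Real.exp (-(r:ℝ)/18) * M^r) * (Real.sqrt 2)^r := by
    rw [show (Real.exp (-(r:ℝ)/18) * M^r) * (Real.sqrt 2)^r
        = Real.exp (-(r:ℝ)/18) * M^r * (Real.sqrt 2)^r by ring]
    calc (E.card : ℝ) * (Real.sqrt 2)^r ≤ ((4:ℝ)/3 * M)^r := key1
      _ ≤ _ := le_of_le_of_eq hexp hsplit
  exact le_of_mul_le_mul_right this (by positivity)
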